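/- Let a₁ ≥ a₂ ≥ ⋯ ≥ a_M ≥ 0 be a nonincreasing sequence of nonnegative reals and let r ≥ 1 be an integer, with M a multiple of r, M = Kr with K ≥ 2. For i = 0, 1, …, K−1 let h_i = (a_{ir+1}, …, a_{(i+1)r}) be the i-th consecutive block of length r. Then √r · Σ_{i=2}^{K−1} ‖h_i‖₂ ≤ Σ_{i=2}^{K−1} ‖h_i‖₁ + (1/4)‖h₁‖₁. -/

import Mathlib

open Finset

/-- The `j`-th largest singular value (1-indexed) of a real matrix `A`, defined as the
`j`-th largest square root of an eigenvalue of `Aᵀ * A`; zero if `j` is out of range. -/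
noncomputable def sval {m n : Type*} [Fintype m] [Fintype n] [DecidableEq n]
    (A : Matrix m n ℝ) (j : ℕ) : ℝ :=
  let ev : Fin (Fintype.card n) → ℝ := fun i =>
    Real.sqrt ((show (A.transpose * A).IsHermitian from
      Matrix.isHermitian_conjTranspose_mul_self A).eigenvalues
      ((Fintype.equivFin n).symm i))
  if h : 1 ≤ j ∧ j ≤ Fintype.card n then
    ev (Tuple.sort ev ⟨Fintype.card n - j, by omega⟩)
  else 0

/-- The trace (nuclear) norm of a real matrix: the sum of its singular values. -/
noncomputable def nuclearNorm {m n : Type*} [Fintype m] [Fintype n] [DecidableEq n]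
    (A : Matrix m n ℝ) : ℝ :=
  ∑ j ∈ Finset.Icc 1 (min (Fintype.card m) (Fintype.card n)), sval A j

/-- The Frobenius norm of a real matrix. -/
noncomputable def matFrobNorm {m n : Type*} [Fintype m] [Fintype n]
    (A : Matrix m n ℝ) : ℝ :=
  Real.sqrt (∑ i, ∑ j, (A i j) ^ 2)

/-- The mode-`n` unfolding of an `N`-way tensor. -/
def tunfold {N : ℕ} {I : Fin N → ℕ} (X : (∀ n, Fin (I n)) → ℝ) (n : Fin N) :
    Matrix (Fin (I n)) (∀ k : {k : Fin N // k ≠ n}, Fin (I k.1)) ℝ :=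
  Matrix.of fun i c =>
    X (fun k => if h : k = n then cast (congrArg (fun t => Fin (I t)) h.symm) i else c ⟨k, h⟩)

/-- The tensor trace norm: the average of the nuclear norms of the mode-`n` unfoldings. -/
noncomputable def tensorNuclearNorm {N : ℕ} {I : Fin N → ℕ} (X : (∀ n, Fin (I n)) → ℝ) : ℝ :=
  (1 / (N : ℝ)) * ∑ n : Fin N, nuclearNorm (tunfold X n)

/-- The Frobenius norm of a tensor. -/
noncomputable def tensorFrobNorm {N : ℕ} {I : Fin N → ℕ} (X : (∀ n, Fin (I n)) → ℝ) : ℝ :=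
  Real.sqrt (∑ t, X t ^ 2)

lemma anti_aux' {a : ℕ → ℝ} {N : ℕ} (h : ∀ j, 1 ≤ j → j < N → a (j + 1) ≤ a j) :
    ∀ j k, 1 ≤ j → j ≤ k → k ≤ N → a k ≤ a j := by
  intro j k hj hjk hkN
  induction k, hjk using Nat.le_induction with
  | base => exact le_rfl
  | succ k hk ih =>
      exact le_trans (h k (le_trans hj hk) (by omega)) (ih (by omega))

lemma block_bound' (r : ℕ) (hr : 1 ≤ r) (a : ℕ → ℝ) (m : ℕ)
    (hB : ∀ j ∈ Icc (m + 1) (m + r), a j ≤ a (m + 1))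
    (hb : ∀ j ∈ Icc (m + 1) (m + r), a (m + r) ≤ a j)
    (hb0 : 0 ≤ a (m + r)) :
    Real.sqrt r * Real.sqrt (∑ j ∈ Icc (m + 1) (m + r), a j ^ 2) ≤
      (∑ j ∈ Icc (m + 1) (m + r), a j) + (r / 4 : ℝ) * (a (m + 1) - a (m + r)) := by
  set s := Icc (m + 1) (m + r) with hs
  set B := a (m + 1) with hBdef
  set b := a (m + r) with hbdef
  set S := ∑ j ∈ s, a j with hSdef
  set X := ∑ j ∈ s, a j ^ 2 with hXdef
  have hcard : (s.card : ℝ) = (r : ℝ) := by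
    simp [hs, Nat.card_Icc]
  have hmem : m + 1 ∈ s := by simp [hs]; omega
  have hBb : 0 ≤ B - b := sub_nonneg.2 (hb _ hmem)
  have haj0 : ∀ j ∈ s, 0 ≤ a j := fun j hj => le_trans hb0 (hb j hj)
  have hS0 : 0 ≤ S := Finset.sum_nonneg haj0
  have hX0 : 0 ≤ X := Finset.sum_nonneg fun j _ => sq_nonneg _
  have key : 0 ≤ ∑ j ∈ s, (B - a j) * (a j - b) :=
    Finset.sum_nonneg fun j hj =>
      mul_nonneg (sub_nonneg.2 (hB j hj)) (sub_nonneg.2 (hb j hj))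
  have expand : ∑ j ∈ s, (B - a j) * (a j - b) = (B + b) * S - X - (r : ℝ) * B * b := by
    have h1 : ∀ j ∈ s, (B - a j) * (a j - b) = ((B + b) * a j - a j ^ 2) - B * b :=
      fun j _ => by ring
    rw [Finset.sum_congr rfl h1, Finset.sum_sub_distrib, Finset.sum_sub_distrib,
      Finset.sum_const, ← Finset.mul_sum, nsmul_eq_mul, hcard, ← hSdef, ← hXdef]
    ring
  have hX : X ≤ (B + b) * S - (r : ℝ) * B * b := by linarith [expand ▸ key]
  have hr0 : (0:ℝ) ≤ (r:ℝ) := by positivity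
  have hY0 : 0 ≤ S + (r : ℝ) / 4 * (B - b) :=
    add_nonneg hS0 (mul_nonneg (by positivity) hBb)
  have hsq : (r : ℝ) * X ≤ (S + (r : ℝ) / 4 * (B - b)) ^ 2 := by
    have h1 : (r:ℝ) * X ≤ (r:ℝ) * ((B + b) * S - (r : ℝ) * B * b) :=
      mul_le_mul_of_nonneg_left hX hr0
    nlinarith [sq_nonneg (S - (r:ℝ) * (B + 3 * b) / 4),
      mul_nonneg (mul_nonneg (mul_nonneg hr0 hr0) hb0) hBb]
  calc Real.sqrt r * Real.sqrt X = Real.sqrt ((r:ℝ) * X) := (Real.sqrt_mul hr0 X).symm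
    _ ≤ Real.sqrt ((S + (r : ℝ) / 4 * (B - b)) ^ 2) := Real.sqrt_le_sqrt hsq
    _ = S + (r : ℝ) / 4 * (B - b) := Real.sqrt_sq hY0

lemma tele_aux' (K r : ℕ) (hr : 1 ≤ r) (a : ℕ → ℝ)
    (hmono : ∀ j, 1 ≤ j → j < K * r → a (j + 1) ≤ a j) :
    ∀ m, 2 ≤ m → m ≤ K - 1 →
      ∑ i ∈ Icc 2 m, (a (i * r + 1) - a ((i + 1) * r)) ≤ a (2 * r + 1) - a ((m + 1) * r) := by
  intro m hm hmK
  induction m, hm using Nat.le_induction with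
  | base => simp
  | succ m hm ih =>
      rw [Finset.sum_Icc_succ_top (by omega : 2 ≤ m + 1)]
      have h1 : a ((m + 1) * r + 1) ≤ a ((m + 1) * r) := by
        apply hmono
        · nlinarith
        · have h2 : m + 1 < K := by omega
          exact Nat.mul_lt_mul_of_lt_of_le h2 le_rfl (by omega)
      have hih := ih (by omega)
      have : a (2 * r + 1) - a ((m + 1) * r) + (a ((m+1) * r + 1) - a ((m + 1 + 1) * r)) ≤
          a (2 * r + 1) - a ((m + 1 + 1) * r) := by linarith
      linarith

/-- Block bound for a nonincreasing nonnegative sequence split into `K` consecutive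
blocks of length `r`: `√r · Σ_{i=2}^{K-1} ‖h_i‖₂ ≤ Σ_{i=2}^{K-1} ‖h_i‖₁ + ‖h₁‖₁/4`. -/
theorem block_l2_sum_le_of_antitone
    (K r : ℕ) (hr : 1 ≤ r) (hK : 2 ≤ K) (a : ℕ → ℝ)
    (hmono : ∀ j, 1 ≤ j → j < K * r → a (j + 1) ≤ a j)
    (hnonneg : ∀ j, 1 ≤ j → j ≤ K * r → 0 ≤ a j) :
    Real.sqrt (r : ℝ) *
        ∑ i ∈ Finset.Icc 2 (K - 1),
          Real.sqrt (∑ j ∈ Finset.Icc (i * r + 1) ((i + 1) * r), a j ^ 2) ≤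
      (∑ i ∈ Finset.Icc 2 (K - 1), ∑ j ∈ Finset.Icc (i * r + 1) ((i + 1) * r), a j)
        + (1 / 4) * ∑ j ∈ Finset.Icc (r + 1) (2 * r), a j := by
  have h2r : 2 * r ≤ K * r := Nat.mul_le_mul_right r hK
  have hsum1_nonneg : 0 ≤ ∑ j ∈ Finset.Icc (r + 1) (2 * r), a j := by
    apply Finset.sum_nonneg
    intro j hj
    simp only [Finset.mem_Icc] at hj
    exact hnonneg j (by omega) (by omega)
  by_cases hK2 : K = 2
  · subst hK2
    rw [show (2 : ℕ) - 1 = 1 from rfl, Finset.Icc_eq_empty (by omega)]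
    simp only [Finset.sum_empty, mul_zero, zero_add]
    linarith
  · have hK3 : 3 ≤ K := by omega
    have anti := anti_aux' (N := K * r) hmono
    have key : ∀ i ∈ Finset.Icc 2 (K - 1),
        Real.sqrt (r : ℝ) * Real.sqrt (∑ j ∈ Finset.Icc (i * r + 1) ((i + 1) * r), a j ^ 2) ≤
          (∑ j ∈ Finset.Icc (i * r + 1) ((i + 1) * r), a j)
            + ((r : ℝ) / 4) * (a (i * r + 1) - a ((i + 1) * r)) := by
      intro i hi
      simp only [Finset.mem_Icc] at hi
      have hub : (i + 1) * r ≤ K * r := Nat.mul_le_mul_right r (by omega)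
      have hrw : (i + 1) * r = i * r + r := by ring
      rw [hrw] at hub ⊢
      apply block_bound' r hr a (i * r)
      · intro j hj
        simp only [Finset.mem_Icc] at hj
        exact anti (i * r + 1) j (by omega) hj.1 (by omega)
      · intro j hj
        simp only [Finset.mem_Icc] at hj
        exact anti j (i * r + r) (by omega) hj.2 (by omega)
      · exact hnonneg _ (by omega) (by omega)
    have hstep := Finset.sum_le_sum key
    have htele := tele_aux' K r hr a hmono (K - 1) (by omega) le_rfl
    rw [show K - 1 + 1 = K from by omega] at htele
    have hKr0 : 0 ≤ a (K * r) := hnonneg _ (by omega) le_rfl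
    have h2r1 : 2 * r + 1 ≤ K * r := by
      have : 3 * r ≤ K * r := Nat.mul_le_mul_right r hK3
      omega
    have hconst : (r : ℝ) * a (2 * r + 1) ≤ ∑ j ∈ Finset.Icc (r + 1) (2 * r), a j := by
      have hcard : (Finset.Icc (r + 1) (2 * r)).card = r := by
        rw [Nat.card_Icc]; omega
      calc (r : ℝ) * a (2 * r + 1)
          = ∑ _j ∈ Finset.Icc (r + 1) (2 * r), a (2 * r + 1) := by
            rw [Finset.sum_const, hcard, nsmul_eq_mul]
        _ ≤ ∑ j ∈ Finset.Icc (r + 1) (2 * r), a j := by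
            apply Finset.sum_le_sum
            intro j hj
            simp only [Finset.mem_Icc] at hj
            exact anti j (2 * r + 1) (by omega) (by omega) h2r1
    have hdelta : ((r : ℝ) / 4) * ∑ i ∈ Finset.Icc 2 (K - 1), (a (i * r + 1) - a ((i + 1) * r))
        ≤ (1 / 4) * ∑ j ∈ Finset.Icc (r + 1) (2 * r), a j := by
      have h0 : ∑ i ∈ Finset.Icc 2 (K - 1), (a (i * r + 1) - a ((i + 1) * r)) ≤ a (2 * r + 1) := by
        linarith
      have hr4 : (0:ℝ) ≤ (r : ℝ) / 4 := by positivity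
      calc ((r : ℝ) / 4) * ∑ i ∈ Finset.Icc 2 (K - 1), (a (i * r + 1) - a ((i + 1) * r))
          ≤ ((r : ℝ) / 4) * a (2 * r + 1) := mul_le_mul_of_nonneg_left h0 hr4
        _ = (1 / 4) * ((r : ℝ) * a (2 * r + 1)) := by ring
        _ ≤ (1 / 4) * ∑ j ∈ Finset.Icc (r + 1) (2 * r), a j := by linarith
    calc Real.sqrt (r : ℝ) *
        ∑ i ∈ Finset.Icc 2 (K - 1),
          Real.sqrt (∑ j ∈ Finset.Icc (i * r + 1) ((i + 1) * r), a j ^ 2)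
        = ∑ i ∈ Finset.Icc 2 (K - 1),
            Real.sqrt (r : ℝ) * Real.sqrt (∑ j ∈ Finset.Icc (i * r + 1) ((i + 1) * r), a j ^ 2) :=
          Finset.mul_sum _ _ _
      _ ≤ ∑ i ∈ Finset.Icc 2 (K - 1),
            ((∑ j ∈ Finset.Icc (i * r + 1) ((i + 1) * r), a j)
              + ((r : ℝ) / 4) * (a (i * r + 1) - a ((i + 1) * r))) := hstep
      _ = (∑ i ∈ Finset.Icc 2 (K - 1), ∑ j ∈ Finset.Icc (i * r + 1) ((i + 1) * r), a j)
            + ((r : ℝ) / 4) * ∑ i ∈ Finset.Icc 2 (K - 1), (a (i * r + 1) - a ((i + 1) * r)) := by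
          rw [Finset.sum_add_distrib, ← Finset.mul_sum]
      _ ≤ (∑ i ∈ Finset.Icc 2 (K - 1), ∑ j ∈ Finset.Icc (i * r + 1) ((i + 1) * r), a j)
            + (1 / 4) * ∑ j ∈ Finset.Icc (r + 1) (2 * r), a j := by linarith
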